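/- Let (V, E, entry, exit, B) be a kernel CFG. If a = v₀, v₁, …, vₙ = b is a path of length n ≥ 1 whose endpoints a and b are barriers, then there exist indices 0 = j₀ < j₁ < … < j_k = n with k ≥ 1 such that v_{j₀}, v_{j₁}, …, v_{j_k} are exactly the vertices of the path that are barriers, and for each 0 ≤ i < k there is a barrier-CFG edge from v_{j_i} to v_{j_{i+1}}. In particular, every path of length at least one between two barriers induces a path in the reduced barrier CFG between them, all of whose vertices occur on the original path. -/

import Mathlib

/-- A path of length `n` from `a` to `b` in the directed graph with edge
relation `E`: vertices `v 0 = a, v 1, …, v n = b` with an edge between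
consecutive vertices. -/
def IsPath {V : Type*} (E : V → V → Prop) (a b : V) (n : ℕ) (v : ℕ → V) : Prop :=
  v 0 = a ∧ v n = b ∧ ∀ i < n, E (v i) (v (i + 1))

/-- `d` dominates `w` (relative to `entry`): every path from `entry` to `w`
contains `d` among its vertices. -/
def Dominates {V : Type*} (E : V → V → Prop) (entry d w : V) : Prop :=
  ∀ n : ℕ, ∀ v : ℕ → V, IsPath E entry w n v → ∃ i ≤ n, v i = d

/-- A barrier-CFG edge from `p` to `q`: a path of length at least one from
`p` to `q` none of whose intermediate vertices is a barrier.  In that case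
`p` is an immediate predecessor barrier of `q`, and `q` an immediate
successor barrier of `p`. -/
def BarrierEdge {V : Type*} (E : V → V → Prop) (B : Set V) (p q : V) : Prop :=
  ∃ n : ℕ, ∃ v : ℕ → V, 1 ≤ n ∧ IsPath E p q n v ∧ ∀ i, 0 < i → i < n → v i ∉ B

theorem aux_barrier {V : Type*} (E : V → V → Prop) (B : Set V) :
    ∀ n : ℕ, 1 ≤ n → ∀ (a b : V) (v : ℕ → V), IsPath E a b n v → a ∈ B → b ∈ B →
    ∃ k : ℕ, 1 ≤ k ∧ ∃ j : ℕ → ℕ,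
      j 0 = 0 ∧ j k = n ∧
      (∀ i < k, j i < j (i + 1)) ∧
      (∀ m ≤ k, j m ≤ n ∧ v (j m) ∈ B) ∧
      (∀ i ≤ n, v i ∈ B → ∃ m ≤ k, j m = i) ∧
      (∀ i < k, BarrierEdge E B (v (j i)) (v (j (i + 1)))) := by
  intro n
  induction n using Nat.strong_induction_on with
  | _ n ih =>
    intro hn a b v hpath ha hb
    classical
    obtain ⟨hv0, hvn, hE⟩ := hpath
    have hex : ∃ m, 0 < m ∧ m ≤ n ∧ v m ∈ B := ⟨n, hn, le_refl n, hvn ▸ hb⟩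
    set m := Nat.find hex with hm
    obtain ⟨hm0, hmn, hmB⟩ := Nat.find_spec hex
    have hmin : ∀ i, 0 < i → i ≤ n → v i ∈ B → m ≤ i := by
      intro i h1 h2 h3
      exact Nat.find_le ⟨h1, h2, h3⟩
    have hedge : BarrierEdge E B (v 0) (v m) :=
      ⟨m, v, hm0, ⟨rfl, rfl, fun i hi => hE i (lt_of_lt_of_le hi hmn)⟩,
        fun i hi0 him hB =>
          absurd (hmin i hi0 (le_trans (le_of_lt him) hmn) hB) (not_le.mpr him)⟩
    rcases eq_or_lt_of_le hmn with heq | hlt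
    · refine ⟨1, le_refl 1, fun i => if i = 0 then 0 else n, rfl, rfl, ?_, ?_, ?_, ?_⟩
      · intro i hi; interval_cases i; simp; omega
      · intro m' hm'; interval_cases m' <;>
          simp [hv0 ▸ ha, hvn ▸ hb]
      · intro i hi hiB
        rcases Nat.eq_zero_or_pos i with h0 | h0
        · exact ⟨0, by norm_num, by simp [h0]⟩
        · have h1 := hmin i h0 hi hiB
          have h2 : i = n := le_antisymm hi (heq ▸ h1)
          exact ⟨1, le_refl 1, by simp [h2]⟩
      · intro i hi; interval_cases i
        simpa using heq ▸ hedge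
    · set v' : ℕ → V := fun i => v (i + m) with hv'
      have hpath' : IsPath E (v m) b (n - m) v' := by
        refine ⟨by simp [hv'], by simp [hv', show n - m + m = n from Nat.sub_add_cancel hmn, hvn], ?_⟩
        intro i hi
        have hilt : i + m < n := by omega
        simpa [hv', Nat.add_right_comm] using hE (i + m) hilt
      obtain ⟨k', hk', j', hj0, hjk, hmono, hbar, hcompl, hbe⟩ :=
        ih (n - m) (by omega) (by omega) (v m) b v' hpath' hmB hb
      refine ⟨k' + 1, by omega, fun i => if i = 0 then 0 else j' (i - 1) + m,
        rfl, by simp [hjk]; omega, ?_, ?_, ?_, ?_⟩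
      · intro i hi
        rcases Nat.eq_zero_or_pos i with h0 | h0
        · subst h0; simp [hj0]; omega
        · obtain ⟨i', rfl⟩ := Nat.exists_eq_add_of_le h0
          simp only [Nat.add_comm 1, Nat.succ_ne_zero, if_false, Nat.add_sub_cancel]
          have := hmono i' (by omega)
          omega
      · intro m' hm'
        rcases Nat.eq_zero_or_pos m' with h0 | h0
        · subst h0; simp [hv0 ▸ ha]
        · obtain ⟨i, rfl⟩ := Nat.exists_eq_add_of_le h0
          simp only [Nat.add_comm 1, Nat.succ_ne_zero, if_false, Nat.add_sub_cancel]
          have hb' := hbar i (by omega)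
          exact ⟨by omega, hb'.2⟩
      · intro i hi hiB
        rcases Nat.eq_zero_or_pos i with h0 | h0
        · exact ⟨0, by omega, by simp [h0]⟩
        · have h1 := hmin i h0 hi hiB
          have hvi : v' (i - m) ∈ B := by
            have : i - m + m = i := by omega
            simpa [hv', this] using hiB
          obtain ⟨m'', hm'', hjm⟩ := hcompl (i - m) (by omega) hvi
          exact ⟨m'' + 1, by omega, by
            simp only [Nat.add_comm 1, Nat.succ_ne_zero, if_false, Nat.add_sub_cancel]
            omega⟩
      · intro i hi
        rcases Nat.eq_zero_or_pos i with h0 | h0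
        · subst h0
          simpa [hj0] using hedge
        · obtain ⟨i', rfl⟩ := Nat.exists_eq_add_of_le h0
          simp only [Nat.add_comm 1, Nat.succ_ne_zero, if_false, Nat.add_sub_cancel]
          exact hbe i' (by omega)

/-- Every path of length at least one between two barriers induces a path in
the reduced barrier CFG between them whose vertices are exactly the barriers
occurring on the original path. -/
theorem stmt_1 {V : Type*} (E : V → V → Prop) (entry exit : V) (B : Set V)
    (hentryB : entry ∈ B) (hexitB : exit ∈ B)
    (a b : V) (n : ℕ) (v : ℕ → V)
    (hn : 1 ≤ n) (hpath : IsPath E a b n v) (ha : a ∈ B) (hb : b ∈ B) :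
    ∃ k : ℕ, 1 ≤ k ∧ ∃ j : ℕ → ℕ,
      j 0 = 0 ∧ j k = n ∧
      (∀ i < k, j i < j (i + 1)) ∧
      (∀ m ≤ k, j m ≤ n ∧ v (j m) ∈ B) ∧
      (∀ i ≤ n, v i ∈ B → ∃ m ≤ k, j m = i) ∧
      (∀ i < k, BarrierEdge E B (v (j i)) (v (j (i + 1)))) := by
  exact aux_barrier E B n hn a b v hpath ha hb
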